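/- arXiv:1010.1746 — 3 statements merged into one kernel-verified Lean document; each statement's English description precedes it below -/
import Mathlib

section
/- In the same two-queue traversal process on a finite rooted tree T with inlinability labels, every node of T except the root is enqueued into the auxiliary queue r exactly once. -/
/-- A finite rooted tree with Boolean inlinability labels; the root is non-inlinable.
    Acyclicity is enforced by a depth function. -/
structure RTree (V : Type) [Fintype V] [DecidableEq V] where
  root : V
  parent : V → Option V
  inlinable : V → Bool
  root_parent : parent root = none
  parent_of_ne : ∀ v, v ≠ root → (parent v).isSome
  depth : V → ℕ
  depth_root : depth root = 0
  depth_parent : ∀ v p, parent v = some p → depth v = depth p + 1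
  root_not_inlinable : inlinable root = false

namespace RTree

/-- Events of the two-queue traversal. -/
inductive Event (V : Type) where
  | deqQ : V → Event V
  | deqR : V → Event V
  | enqQ : V → Event V
  | enqR : V → Event V
  deriving DecidableEq

variable {V : Type} [Fintype V] [DecidableEq V] (T : RTree V)

/-- The children of a node, as a list. -/
noncomputable def children (v : V) : List V :=
  (Finset.univ.filter (fun w => T.parent w = some v)).toList

/-- One run of the two-queue traversal with the given fuel, starting from the state
    `(q, r)`.  Dequeues from the auxiliary queue `r` take priority (the inner loop);
    dequeuing an inlinable node from `r` enqueues its children into `r`, dequeuing a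
    non-inlinable node from `r` enqueues it into `q`; when `r` is empty, a node is
    dequeued from `q` and its children are enqueued into `r`.  Returns the event
    trace together with the final state. -/
noncomputable def run (T : RTree V) : ℕ → List V × List V → List (Event V) × (List V × List V)
  | 0, s => ([], s)
  | fuel+1, (q, f :: r) =>
      if T.inlinable f then
        let res := run T fuel (q, r ++ T.children f)
        (Event.deqR f :: ((T.children f).map Event.enqR ++ res.1), res.2)
      else
        let res := run T fuel (q ++ [f], r)
        (Event.deqR f :: Event.enqQ f :: res.1, res.2)
  | fuel+1, (e :: q, []) =>
      let res := run T fuel (q, T.children e)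
      (Event.deqQ e :: ((T.children e).map Event.enqR ++ res.1), res.2)
  | _+1, ([], []) => ([], ([], []))

/-- `a` is a (proper-or-self) ancestor of `v` after `k` parent steps. -/
def parentIter (T : RTree V) : ℕ → V → Option V
  | 0, v => some v
  | k+1, v => (T.parent v).bind (parentIter T k)

/-- `a` is a strict ancestor of `v`. -/
def StrictAncestor (a v : V) : Prop := ∃ k, 1 ≤ k ∧ T.parentIter k v = some a

end RTree


namespace RTree

/-- Whether an event is a dequeue from the main queue `q`. -/
def Event.isDeqQ {V : Type} : Event V → Bool
  | .deqQ _ => true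
  | _ => false

/-- Whether an event is a dequeue from the auxiliary queue `r`. -/
def Event.isDeqR {V : Type} : Event V → Bool
  | .deqR _ => true
  | _ => false

/-- Whether an event is an enqueue into the auxiliary queue `r`. -/
def Event.isEnqR {V : Type} : Event V → Bool
  | .enqR _ => true
  | _ => false

end RTree

section Aux
set_option linter.dupNamespace false
set_option linter.unusedSectionVars false
namespace RTree

variable {V : Type} [Fintype V] [DecidableEq V] (T : RTree V)

lemma count_children' (u v : V) :
    (T.children u).count v = if T.parent v = some u then 1 else 0 := by
  unfold children
  have hcnt : ∀ (l : List V), l.Nodup → l.count v = if v ∈ l then 1 else 0 := by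
    intro l hl
    split_ifs with h
    exacts [List.count_eq_one_of_mem hl h, List.count_eq_zero_of_not_mem h]
  rw [hcnt _ (Finset.nodup_toList _)]
  simp [Finset.mem_toList]

@[simp] lemma count_map_enqR_deqQ (l : List V) (v : V) :
    (l.map Event.enqR).count (Event.deqQ v) = 0 := by
  rw [List.count_eq_zero]; simp

@[simp] lemma count_map_enqR_deqR (l : List V) (v : V) :
    (l.map Event.enqR).count (Event.deqR v) = 0 := by
  rw [List.count_eq_zero]; simp

@[simp] lemma count_map_enqR_enqQ (l : List V) (v : V) :
    (l.map Event.enqR).count (Event.enqQ v) = 0 := by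
  rw [List.count_eq_zero]; simp

@[simp] lemma count_map_enqR_enqR (l : List V) (v : V) :
    (l.map Event.enqR).count (Event.enqR v) = l.count v :=
  List.count_map_of_injective _ _ (fun a b h => by cases h; rfl) _

lemma run_counts : ∀ (fuel : ℕ) (q r : List V) (tr : List (Event V)) (q' r' : List V),
    run T fuel (q, r) = (tr, (q', r')) →
    ∀ v : V,
      tr.count (Event.deqQ v) + q'.count v = tr.count (Event.enqQ v) + q.count v ∧
      tr.count (Event.deqR v) + r'.count v = tr.count (Event.enqR v) + r.count v ∧
      tr.count (Event.enqQ v) = (if T.inlinable v then 0 else tr.count (Event.deqR v)) ∧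
      tr.count (Event.enqR v) = (T.parent v).elim 0
        (fun p => tr.count (Event.deqQ p) +
          if T.inlinable p then tr.count (Event.deqR p) else 0) := by
  intro fuel
  induction fuel with
  | zero =>
    intro q r tr q' r' h v
    simp [run] at h
    obtain ⟨h1, h2, h3⟩ := h
    subst h1; subst h2; subst h3
    cases T.parent v <;> simp
  | succ n ih =>
    intro q r tr q' r' h v
    match q, r with
    | q, f :: r =>
      by_cases hf : T.inlinable f
      · obtain ⟨tr₀, q₀, r₀, hrun⟩ : ∃ tr₀ q₀ r₀,
            run T n (q, r ++ T.children f) = (tr₀, (q₀, r₀)) :=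
          ⟨_, _, _, rfl⟩
        rw [run, if_pos hf, hrun] at h
        simp only [Prod.mk.injEq] at h
        obtain ⟨rfl, rfl, rfl⟩ := h
        obtain ⟨I1, I2, I3, I4⟩ := ih q (r ++ T.children f) tr₀ q₀ r₀ hrun v
        rw [List.count_append, count_children'] at I2
        refine ⟨?_, ?_, ?_, ?_⟩
        · simp only [beq_iff_eq, List.count_cons, List.count_append,
            count_map_enqR_deqQ, count_map_enqR_enqQ, reduceCtorEq, if_false,
            add_zero, zero_add]
          omega
        · simp only [beq_iff_eq, List.count_cons, List.count_append,
            count_map_enqR_deqR, count_map_enqR_enqR, count_children',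
            reduceCtorEq, if_false, Event.deqR.injEq, add_zero, zero_add]
          omega
        · simp only [beq_iff_eq, List.count_cons, List.count_append,
            count_map_enqR_deqR, count_map_enqR_enqQ, reduceCtorEq, if_false,
            Event.deqR.injEq, add_zero, zero_add]
          by_cases hv : T.inlinable v
          · simp only [if_pos hv]
            simpa [hv] using I3
          · have hvf : ¬ (v = f) := fun h => hv (h ▸ hf)
            have hfv : ¬ (f = v) := fun h => hvf h.symm
            simp only [if_neg hv, if_neg hvf, if_neg hfv, add_zero]
            rw [I3, if_neg hv]
        · rcases hp : T.parent v with _ | p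
          · simp only [hp, Option.elim] at I4
            simp only [beq_iff_eq, List.count_cons, List.count_append,
              count_map_enqR_enqR, count_children', hp, reduceCtorEq, if_false,
              Option.elim, add_zero, zero_add]
            omega
          · simp only [hp, Option.elim] at I4
            simp only [beq_iff_eq, List.count_cons, List.count_append,
              count_map_enqR_enqR, count_children', count_map_enqR_deqQ,
              count_map_enqR_deqR, hp, reduceCtorEq, if_false, Option.elim,
              Event.deqR.injEq, Option.some.injEq, add_zero, zero_add]
            by_cases hpf : p = f
            · subst hpf
              simp only [hf, if_true, if_pos rfl] at I4 ⊢
              omega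
            · have hfp : ¬ (f = p) := fun h => hpf h.symm
              simp only [if_neg hpf, if_neg hfp, add_zero, zero_add]
              by_cases hip : T.inlinable p
              · simp only [if_pos hip] at I4 ⊢
                omega
              · simp only [if_neg hip] at I4 ⊢
                omega
      · obtain ⟨tr₀, q₀, r₀, hrun⟩ : ∃ tr₀ q₀ r₀,
            run T n (q ++ [f], r) = (tr₀, (q₀, r₀)) :=
          ⟨_, _, _, rfl⟩
        rw [run, if_neg hf, hrun] at h
        simp only [Prod.mk.injEq] at h
        obtain ⟨rfl, rfl, rfl⟩ := h
        obtain ⟨I1, I2, I3, I4⟩ := ih (q ++ [f]) r tr₀ q₀ r₀ hrun v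
        simp only [List.count_append, List.count_cons, List.count_nil,
          beq_iff_eq, zero_add, add_zero] at I1
        refine ⟨?_, ?_, ?_, ?_⟩
        · simp only [beq_iff_eq, List.count_cons, reduceCtorEq, if_false,
            Event.enqQ.injEq, add_zero, zero_add]
          omega
        · simp only [beq_iff_eq, List.count_cons, reduceCtorEq, if_false,
            Event.deqR.injEq, add_zero, zero_add]
          omega
        · simp only [beq_iff_eq, List.count_cons, reduceCtorEq, if_false,
            Event.deqR.injEq, Event.enqQ.injEq, add_zero, zero_add]
          by_cases hv : T.inlinable v
          · have hvf : ¬ (v = f) := fun h => hf (h ▸ hv)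
            have hfv : ¬ (f = v) := fun h => hvf h.symm
            simp only [if_pos hv, if_neg hvf, if_neg hfv, add_zero]
            simpa [hv] using I3
          · simp only [if_neg hv]
            rw [I3, if_neg hv]
        · rcases hp : T.parent v with _ | p
          · simp only [hp, Option.elim] at I4
            simp only [beq_iff_eq, List.count_cons, hp, reduceCtorEq, if_false,
              Option.elim, add_zero, zero_add]
            omega
          · simp only [hp, Option.elim] at I4
            simp only [beq_iff_eq, List.count_cons, hp, reduceCtorEq, if_false,
              Option.elim, Event.deqR.injEq, add_zero, zero_add]
            by_cases hpf : p = f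
            · subst hpf
              simp only [hf, if_false, Bool.false_eq_true, if_neg hf] at I4 ⊢
              omega
            · have hfp : ¬ (f = p) := fun h => hpf h.symm
              simp only [if_neg hpf, if_neg hfp, add_zero, zero_add]
              by_cases hip : T.inlinable p
              · simp only [if_pos hip] at I4 ⊢
                omega
              · simp only [if_neg hip] at I4 ⊢
                omega
    | e :: q, [] =>
      obtain ⟨tr₀, q₀, r₀, hrun⟩ : ∃ tr₀ q₀ r₀,
          run T n (q, T.children e) = (tr₀, (q₀, r₀)) :=
        ⟨_, _, _, rfl⟩
      rw [run, hrun] at h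
      simp only [Prod.mk.injEq] at h
      obtain ⟨rfl, rfl, rfl⟩ := h
      obtain ⟨I1, I2, I3, I4⟩ := ih q (T.children e) tr₀ q₀ r₀ hrun v
      rw [count_children'] at I2
      refine ⟨?_, ?_, ?_, ?_⟩
      · simp only [beq_iff_eq, List.count_cons, List.count_append,
          count_map_enqR_deqQ, count_map_enqR_enqQ, reduceCtorEq, if_false,
          Event.deqQ.injEq, add_zero, zero_add]
        omega
      · simp only [beq_iff_eq, List.count_cons, List.count_append,
          count_map_enqR_deqR, count_map_enqR_enqR, count_children',
          reduceCtorEq, if_false, List.count_nil, add_zero, zero_add]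
        omega
      · simp only [beq_iff_eq, List.count_cons, List.count_append,
          count_map_enqR_deqR, count_map_enqR_enqQ, reduceCtorEq, if_false,
          add_zero, zero_add]
        exact I3
      · rcases hp : T.parent v with _ | p
        · simp only [hp, Option.elim] at I4
          simp only [beq_iff_eq, List.count_cons, List.count_append,
            count_map_enqR_enqR, count_children', hp, reduceCtorEq, if_false,
            Option.elim, add_zero, zero_add]
          omega
        · simp only [hp, Option.elim] at I4
          simp only [beq_iff_eq, List.count_cons, List.count_append,
            count_map_enqR_enqR, count_children', count_map_enqR_deqQ,
            count_map_enqR_deqR, hp, reduceCtorEq, if_false, Option.elim,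
            Event.deqQ.injEq, Option.some.injEq, add_zero, zero_add]
          by_cases hpe : p = e
          · subst hpe
            simp only [if_pos rfl] at I4 ⊢
            omega
          · have hep : ¬ (e = p) := fun h => hpe h.symm
            simp only [if_neg hpe, if_neg hep, add_zero, zero_add]
            by_cases hip : T.inlinable p
            · simp only [if_pos hip] at I4 ⊢
              omega
            · simp only [if_neg hip] at I4 ⊢
              omega
    | [], [] =>
      rw [run] at h
      simp only [Prod.mk.injEq] at h
      obtain ⟨rfl, rfl, rfl⟩ := h
      cases T.parent v <;> simp

end RTree
end Aux

/-- Lemma 4.3: over the entire (terminating) run of the two-queue traversal,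
every node of the tree except the root is enqueued into the auxiliary queue `r`
exactly once. -/
theorem xinsert_r_exactly_once
    {V : Type} [Fintype V] [DecidableEq V] (T : RTree V)
    (fuel : ℕ) (tr : List (RTree.Event V))
    (hrun : RTree.run T fuel ([T.root], []) = (tr, ([], []))) :
    ∀ v : V, v ≠ T.root → tr.count (RTree.Event.enqR v) = 1 := by
  intro v hv
  have H := RTree.run_counts T fuel [T.root] [] tr [] [] hrun
  have key : ∀ d u, T.depth u ≤ d → u ≠ T.root →
      tr.count (RTree.Event.enqR u) = 1 := by
    intro d
    induction d with
    | zero =>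
      intro u hd hu
      obtain ⟨p, hp⟩ := Option.isSome_iff_exists.mp (T.parent_of_ne u hu)
      have := T.depth_parent u p hp
      omega
    | succ d ihd =>
      intro u hd hu
      obtain ⟨p, hp⟩ := Option.isSome_iff_exists.mp (T.parent_of_ne u hu)
      have hdep := T.depth_parent u p hp
      have Du := (H u).2.2.2
      rw [hp] at Du
      simp only [Option.elim] at Du
      have Ap := (H p).1
      have Bp := (H p).2.1
      have Cp := (H p).2.2.1
      simp only [List.count_nil, List.count_cons, beq_iff_eq, add_zero,
        zero_add] at Ap Bp
      by_cases hpr : p = T.root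
      · subst hpr
        have hir := T.root_not_inlinable
        have Dr := (H T.root).2.2.2
        rw [T.root_parent] at Dr
        simp only [Option.elim] at Dr
        rw [Du, if_neg (by simp [hir])]
        rw [Cp, if_neg (by simp [hir])] at Ap
        simp at Ap
        omega
      · have hp1 : tr.count (RTree.Event.enqR p) = 1 := ihd p (by omega) hpr
        have hrp : ¬ (T.root = p) := fun h => hpr h.symm
        rw [if_neg hrp] at Ap
        rw [Du]
        by_cases hip : T.inlinable p
        · rw [if_pos hip]
          rw [Cp, if_pos hip] at Ap
          omega
        · rw [if_neg hip]
          rw [Cp, if_neg hip] at Ap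
          omega
  exact key (T.depth v) v le_rfl hv
end

section
/- For any node f dequeued from the auxiliary queue r during the two-queue traversal triggered by dequeuing a non-inlinable node e from q, exactly one of the following holds: (1) f is a child of e, or (2) f's nearest non-inlinable strict ancestor is e and f's parent is inlinable (i.e., every strict ancestor of f below e is inlinable). In particular, every node enqueued into r during the processing of e is a descendant of e. -/
namespace RTree

variable {V : Type} [Fintype V] [DecidableEq V] (T : RTree V)

lemma depth_of_parentIter : ∀ k (v a : V), T.parentIter k v = some a →
    T.depth v = T.depth a + k := by
  intro k
  induction k with
  | zero => intro v a h; simp [parentIter] at h; subst h; rfl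
  | succ k ih =>
    intro v a h
    simp only [parentIter, Option.bind_eq_some_iff] at h
    obtain ⟨p, hp, hpi⟩ := h
    have := ih p a hpi
    have := T.depth_parent v p hp
    omega

lemma sa_depth {a v : V} (h : T.StrictAncestor a v) : T.depth a < T.depth v := by
  obtain ⟨k, hk, h⟩ := h
  have := T.depth_of_parentIter k v a h
  omega

lemma sa_parent {f g : V} (h : T.parent g = some f) : T.StrictAncestor f g := by
  refine ⟨1, le_refl _, ?_⟩
  simp [parentIter, h]

lemma sa_step {a f g : V} (h : T.parent g = some f) (ha : T.StrictAncestor a f) :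
    T.StrictAncestor a g := by
  obtain ⟨k, hk, hki⟩ := ha
  exact ⟨k + 1, by omega, by simp [parentIter, h, hki]⟩

lemma sa_decomp {a g : V} (h : T.StrictAncestor a g) :
    ∃ p, T.parent g = some p ∧ (a = p ∨ T.StrictAncestor a p) := by
  obtain ⟨k, hk, hki⟩ := h
  obtain ⟨m, rfl⟩ : ∃ m, k = m + 1 := ⟨k - 1, by omega⟩
  simp only [parentIter, Option.bind_eq_some_iff] at hki
  obtain ⟨p, hp, hpi⟩ := hki
  refine ⟨p, hp, ?_⟩
  rcases Nat.eq_zero_or_pos m with hm | hm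
  · subst hm; simp [parentIter] at hpi; left; exact hpi.symm
  · right; exact ⟨m, hm, hpi⟩

/-- The inner-loop invariant for elements of `r` relative to current anchor `e`. -/
def Inv (e f : V) : Prop :=
  T.StrictAncestor e f ∧
    ∀ a, T.StrictAncestor a f → T.StrictAncestor e a → T.inlinable a = true

lemma inv_new {e g : V} (h : T.parent g = some e) : T.Inv e g := by
  refine ⟨T.sa_parent h, ?_⟩
  intro a ha hea
  obtain ⟨p, hp, hap⟩ := T.sa_decomp ha
  rw [h] at hp
  obtain rfl : e = p := Option.some_injective _ hp
  rcases hap with rfl | hap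
  · exact absurd (T.sa_depth hea) (lt_irrefl _)
  · have := T.sa_depth hap
    have := T.sa_depth hea
    omega

lemma inv_child {e f g : V} (hf : T.Inv e f) (hfl : T.inlinable f = true)
    (h : T.parent g = some f) : T.Inv e g := by
  refine ⟨T.sa_step h hf.1, ?_⟩
  intro a ha hea
  obtain ⟨p, hp, hap⟩ := T.sa_decomp ha
  rw [h] at hp
  obtain rfl : f = p := Option.some_injective _ hp
  rcases hap with rfl | hap
  · exact hfl
  · exact hf.2 a hap hea

/-- The exclusive-or property in the theorem's conclusion. -/
def XorP (e f : V) : Prop :=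
  Xor' (T.parent f = some e)
    ((∃ p : V, T.parent f = some p ∧ T.inlinable p = true) ∧
      T.StrictAncestor e f ∧
      ∀ a : V, T.StrictAncestor a f → T.StrictAncestor e a → T.inlinable a = true)

lemma xor_of_inv {e f : V} (he : T.inlinable e = false) (hf : T.Inv e f) :
    T.XorP e f := by
  by_cases hpe : T.parent f = some e
  · left
    refine ⟨hpe, ?_⟩
    rintro ⟨⟨p, hp, hpl⟩, -, -⟩
    rw [hpe] at hp
    obtain rfl : e = p := Option.some_injective _ hp
    rw [he] at hpl; exact Bool.false_ne_true hpl
  · right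
    refine ⟨⟨?_, hf.1, hf.2⟩, hpe⟩
    obtain ⟨p, hp, hap⟩ := T.sa_decomp hf.1
    rcases hap with rfl | hap
    · exact absurd hp hpe
    · exact ⟨p, hp, hf.2 p (T.sa_parent hp) hap⟩

/-- Property of a trace segment relative to the current anchor `e`:
    deqR/enqR events before the first deqQ satisfy the invariant wrt `e`. -/
def GoodW (e : V) (tr : List (Event V)) : Prop :=
  (∀ (j : ℕ) f, tr[j]? = some (Event.deqR f) →
    (∀ (k : ℕ), k < j → ∀ e', tr[k]? ≠ some (Event.deqQ e')) → T.XorP e f) ∧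
  (∀ (j : ℕ) f, tr[j]? = some (Event.enqR f) →
    (∀ (k : ℕ), k < j → ∀ e', tr[k]? ≠ some (Event.deqQ e')) → T.StrictAncestor e f)

/-- The theorem's conclusion as a predicate on traces. -/
def Good (tr : List (Event V)) : Prop :=
  (∀ e f : V, ∀ i j : ℕ, i < j →
      tr[i]? = some (Event.deqQ e) → tr[j]? = some (Event.deqR f) →
      (∀ k : ℕ, i < k → k < j → ∀ e' : V, tr[k]? ≠ some (Event.deqQ e')) →
      T.XorP e f) ∧
  (∀ e f : V, ∀ i j : ℕ, i < j →
      tr[i]? = some (Event.deqQ e) → tr[j]? = some (Event.enqR f) →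
      (∀ k : ℕ, i < k → k < j → ∀ e' : V, tr[k]? ≠ some (Event.deqQ e')) →
      T.StrictAncestor e f)

lemma goodW_nil (e : V) : T.GoodW e [] := by
  constructor <;> intro j f h <;> simp at h

lemma good_nil : T.Good ([] : List (Event V)) := by
  constructor <;> intro e f i j hij h1 h2 <;> simp at h1

lemma goodW_cons {e : V} {x : Event V} {tr : List (Event V)} (hW : T.GoodW e tr)
    (h1 : ∀ f, x = Event.deqR f → T.XorP e f)
    (h2 : ∀ f, x = Event.enqR f → T.StrictAncestor e f) :
    T.GoodW e (x :: tr) := by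
  constructor
  · rintro (_ | j) f hj hk
    · exact h1 f (Option.some_injective _ hj)
    · refine hW.1 j f hj (fun k hk' e' => ?_)
      exact hk (k + 1) (by omega) e'
  · rintro (_ | j) f hj hk
    · exact h2 f (Option.some_injective _ hj)
    · refine hW.2 j f hj (fun k hk' e' => ?_)
      exact hk (k + 1) (by omega) e'

lemma good_cons {x : Event V} {tr : List (Event V)}
    (hx : ∀ e', x ≠ Event.deqQ e') (h : T.Good tr) : T.Good (x :: tr) := by
  constructor
  · rintro e f (_ | i) (_ | j) hij hi hj hk
    · exact absurd (Option.some_injective _ hi) (hx e)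
    · exact absurd (Option.some_injective _ hi) (hx e)
    · omega
    · exact h.1 e f i j (by omega) hi hj
        (fun k h1 h2 e' => hk (k + 1) (by omega) (by omega) e')
  · rintro e f (_ | i) (_ | j) hij hi hj hk
    · exact absurd (Option.some_injective _ hi) (hx e)
    · exact absurd (Option.some_injective _ hi) (hx e)
    · omega
    · exact h.2 e f i j (by omega) hi hj
        (fun k h1 h2 e' => hk (k + 1) (by omega) (by omega) e')

lemma goodW_cons_deqQ (e e' : V) (tr : List (Event V)) :
    T.GoodW e (Event.deqQ e' :: tr) := by
  constructor
  · rintro (_ | j) f hj hk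
    · simp at hj
    · exact absurd rfl (hk 0 (by omega) e')
  · rintro (_ | j) f hj hk
    · simp at hj
    · exact absurd rfl (hk 0 (by omega) e')

lemma good_cons_deqQ {e' : V} {tr : List (Event V)}
    (hW : T.GoodW e' tr) (h : T.Good tr) : T.Good (Event.deqQ e' :: tr) := by
  constructor
  · rintro e f (_ | i) (_ | j) hij hi hj hk
    · omega
    · obtain rfl : e = e' := by
        have := Option.some_injective _ hi; injection this with h; exact h.symm
      exact hW.1 j f hj (fun k hkj ee => hk (k + 1) (by omega) (by omega) ee)
    · omega
    · exact h.1 e f i j (by omega) hi hj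
        (fun k h1 h2 ee => hk (k + 1) (by omega) (by omega) ee)
  · rintro e f (_ | i) (_ | j) hij hi hj hk
    · omega
    · obtain rfl : e = e' := by
        have := Option.some_injective _ hi; injection this with h; exact h.symm
      exact hW.2 j f hj (fun k hkj ee => hk (k + 1) (by omega) (by omega) ee)
    · omega
    · exact h.2 e f i j (by omega) hi hj
        (fun k h1 h2 ee => hk (k + 1) (by omega) (by omega) ee)

lemma goodW_append_enqR {e : V} {cs : List V} {tr : List (Event V)}
    (hcs : ∀ g ∈ cs, T.StrictAncestor e g) (hW : T.GoodW e tr) :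
    T.GoodW e (cs.map Event.enqR ++ tr) := by
  induction cs with
  | nil => simpa using hW
  | cons c cs ih =>
    simp only [List.map_cons, List.cons_append]
    refine T.goodW_cons (ih (fun g hg => hcs g (List.mem_cons_of_mem _ hg))) ?_ ?_
    · intro f hf; exact absurd hf (by simp)
    · intro f hf
      obtain rfl : c = f := by injection hf
      exact hcs c (List.mem_cons_self)

lemma good_append_enqR {cs : List V} {tr : List (Event V)}
    (h : T.Good tr) : T.Good (cs.map Event.enqR ++ tr) := by
  induction cs with
  | nil => simpa using h
  | cons c cs ih =>
    simp only [List.map_cons, List.cons_append]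
    exact T.good_cons (by simp) ih

lemma mem_children {v w : V} (h : w ∈ T.children v) : T.parent w = some v := by
  simp only [children, Finset.mem_toList, Finset.mem_filter] at h
  exact h.2

lemma run_main : ∀ fuel (q r : List V) (tr : List (Event V)) s',
    run T fuel (q, r) = (tr, s') →
    (∀ x ∈ q, T.inlinable x = false) →
    ∀ e, T.inlinable e = false → (∀ f ∈ r, T.Inv e f) →
    T.GoodW e tr ∧ T.Good tr := by
  intro fuel
  induction fuel with
  | zero =>
    intro q r tr s' hrun hq e he hr
    simp only [run] at hrun
    obtain ⟨rfl, rfl⟩ : ([] : List (Event V)) = tr ∧ (q, r) = s' := by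
      exact ⟨congrArg Prod.fst hrun, congrArg Prod.snd hrun⟩
    exact ⟨T.goodW_nil e, T.good_nil⟩
  | succ fuel ih =>
    intro q r tr s' hrun hq e he hr
    match r, q with
    | f :: r', q =>
      by_cases hf : T.inlinable f
      · simp only [run, hf, if_true] at hrun
        obtain ⟨htr, hs⟩ : _ ∧ _ := ⟨congrArg Prod.fst hrun, congrArg Prod.snd hrun⟩
        obtain ⟨tr', s'', hrun'⟩ :
            ∃ tr' s'', run T fuel (q, r' ++ T.children f) = (tr', s'') :=
          ⟨_, _, rfl⟩
        rw [hrun'] at htr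
        subst htr
        have hIf : T.Inv e f := hr f (List.mem_cons_self)
        have hrr : ∀ g ∈ r' ++ T.children f, T.Inv e g := by
          intro g hg
          rcases List.mem_append.1 hg with hg | hg
          · exact hr g (List.mem_cons_of_mem _ hg)
          · exact T.inv_child hIf hf (T.mem_children hg)
        obtain ⟨hW, hG⟩ := ih q _ tr' s'' hrun' hq e he hrr
        have hWm : T.GoodW e ((T.children f).map Event.enqR ++ tr') :=
          T.goodW_append_enqR
            (fun g hg => (T.inv_child hIf hf (T.mem_children hg)).1) hW
        have hGm : T.Good ((T.children f).map Event.enqR ++ tr') :=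
          T.good_append_enqR hG
        refine ⟨T.goodW_cons hWm ?_ ?_, T.good_cons (by simp) hGm⟩
        · intro g hg
          obtain rfl : f = g := by injection hg
          exact T.xor_of_inv he hIf
        · intro g hg; exact absurd hg (by simp)
      · simp only [run, hf, if_false, Bool.false_eq_true] at hrun
        obtain ⟨htr, hs⟩ : _ ∧ _ := ⟨congrArg Prod.fst hrun, congrArg Prod.snd hrun⟩
        obtain ⟨tr', s'', hrun'⟩ :
            ∃ tr' s'', run T fuel (q ++ [f], r') = (tr', s'') := ⟨_, _, rfl⟩
        rw [hrun'] at htr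
        subst htr
        have hIf : T.Inv e f := hr f (List.mem_cons_self)
        have hq' : ∀ x ∈ q ++ [f], T.inlinable x = false := by
          intro x hx
          rcases List.mem_append.1 hx with hx | hx
          · exact hq x hx
          · simp at hx; subst hx; exact Bool.eq_false_iff.2 hf
        obtain ⟨hW, hG⟩ := ih (q ++ [f]) r' tr' s'' hrun' hq' e he
          (fun g hg => hr g (List.mem_cons_of_mem _ hg))
        have hW2 : T.GoodW e (Event.enqQ f :: tr') :=
          T.goodW_cons hW (fun g hg => absurd hg (by simp))
            (fun g hg => absurd hg (by simp))
        have hG2 : T.Good (Event.enqQ f :: tr') := T.good_cons (by simp) hG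
        refine ⟨T.goodW_cons hW2 ?_ (fun g hg => absurd hg (by simp)),
          T.good_cons (by simp) hG2⟩
        intro g hg
        obtain rfl : f = g := by injection hg
        exact T.xor_of_inv he hIf
    | [], e' :: q' =>
      simp only [run] at hrun
      obtain ⟨htr, hs⟩ : _ ∧ _ := ⟨congrArg Prod.fst hrun, congrArg Prod.snd hrun⟩
      obtain ⟨tr', s'', hrun'⟩ :
          ∃ tr' s'', run T fuel (q', T.children e') = (tr', s'') := ⟨_, _, rfl⟩
      rw [hrun'] at htr
      subst htr
      have he' : T.inlinable e' = false := hq e' (List.mem_cons_self)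
      obtain ⟨hW, hG⟩ := ih q' (T.children e') tr' s'' hrun'
        (fun x hx => hq x (List.mem_cons_of_mem _ hx)) e' he'
        (fun g hg => T.inv_new (T.mem_children hg))
      have hWm : T.GoodW e' ((T.children e').map Event.enqR ++ tr') :=
        T.goodW_append_enqR
          (fun g hg => (T.inv_new (T.mem_children hg)).1) hW
      have hGm : T.Good ((T.children e').map Event.enqR ++ tr') :=
        T.good_append_enqR hG
      exact ⟨T.goodW_cons_deqQ e e' _, T.good_cons_deqQ hWm hGm⟩
    | [], [] =>
      simp only [run] at hrun
      obtain ⟨rfl, rfl⟩ : ([] : List (Event V)) = tr ∧ _ = s' :=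
        ⟨congrArg Prod.fst hrun, congrArg Prod.snd hrun⟩
      exact ⟨T.goodW_nil e, T.good_nil⟩

end RTree

/-- During the processing of a non-inlinable node `e` (the segment of the trace
after `deqQ e` and before the next dequeue from `q`), every node `f` dequeued from
`r` satisfies exactly one of: (1) `f` is a child of `e`; (2) `f`'s parent is
inlinable and `e` is `f`'s nearest non-inlinable strict ancestor (every strict
ancestor of `f` strictly below `e` is inlinable).  Moreover every node enqueued
into `r` during the processing of `e` is a strict descendant of `e`. -/
theorem xinsert_inner_loop_descendants
    {V : Type} [Fintype V] [DecidableEq V] (T : RTree V)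
    (fuel : ℕ) (tr : List (RTree.Event V))
    (hrun : RTree.run T fuel ([T.root], []) = (tr, ([], []))) :
    (∀ e f : V, ∀ i j : ℕ, i < j →
      tr[i]? = some (RTree.Event.deqQ e) →
      tr[j]? = some (RTree.Event.deqR f) →
      (∀ k : ℕ, i < k → k < j → ∀ e' : V, tr[k]? ≠ some (RTree.Event.deqQ e')) →
      Xor' (T.parent f = some e)
        ((∃ p : V, T.parent f = some p ∧ T.inlinable p = true) ∧
          T.StrictAncestor e f ∧
          ∀ a : V, T.StrictAncestor a f → T.StrictAncestor e a →
            T.inlinable a = true)) ∧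
    (∀ e f : V, ∀ i j : ℕ, i < j →
      tr[i]? = some (RTree.Event.deqQ e) →
      tr[j]? = some (RTree.Event.enqR f) →
      (∀ k : ℕ, i < k → k < j → ∀ e' : V, tr[k]? ≠ some (RTree.Event.deqQ e')) →
      T.StrictAncestor e f) := by
  obtain ⟨hW, hG⟩ := T.run_main fuel [T.root] [] tr ([], []) hrun
    (by intro x hx; simp at hx; subst hx; exact T.root_not_inlinable)
    T.root T.root_not_inlinable (by simp)
  exact ⟨fun e f i j h1 h2 h3 h4 => hG.1 e f i j h1 h2 h3 h4, hG.2⟩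
end

section
/- Let T be a finite rooted tree with Boolean inlinability labels and suppose all nodes except the root are inlinable. Then the two-queue traversal dequeues only the root from q, and the auxiliary queue r processes all other n-1 nodes; hence exactly one tuple is produced. Dually, if no node is inlinable, every node is dequeued from q and n tuples are produced. -/
namespace XP
open RTree
variable {V : Type} [Fintype V] [DecidableEq V] (T : RTree V)

lemma pi_succ' (k : ℕ) (v : V) :
    T.parentIter (k+1) v = (T.parentIter k v).bind T.parent := by
  induction k generalizing v with
  | zero => cases h : T.parent v <;> simp [RTree.parentIter, h]
  | succ k ih =>
      show (T.parent v).bind (T.parentIter (k+1)) = _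
      cases h : T.parent v with
      | none => simp [RTree.parentIter, h]
      | some p =>
          have : T.parentIter (k+1) v = T.parentIter k p := by
            show (T.parent v).bind (T.parentIter k) = _
            rw [h, Option.bind_some]
          rw [Option.bind_some, this, ih p]

lemma depth_of_pi : ∀ (k : ℕ) (v a : V), T.parentIter k v = some a →
    T.depth v = T.depth a + k := by
  intro k
  induction k with
  | zero =>
      intro v a h
      have : v = a := by simpa [RTree.parentIter] using h
      subst this; omega
  | succ k ih =>
      intro v a h
      rcases hp : T.parent v with _ | p
      · simp [RTree.parentIter, hp] at h
      · have h' : T.parentIter k p = some a := by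
          simpa [RTree.parentIter, hp] using h
        have := ih p a h'
        have := T.depth_parent v p hp
        omega

lemma depth_zero (v : V) (h : T.depth v = 0) : v = T.root := by
  by_contra hne
  obtain ⟨p, hp⟩ := Option.isSome_iff_exists.mp (T.parent_of_ne v hne)
  have := T.depth_parent v p hp
  omega

lemma root_pi (v : V) : T.parentIter (T.depth v) v = some T.root := by
  generalize hn : T.depth v = n
  induction n generalizing v with
  | zero => rw [depth_zero T v hn]; rfl
  | succ n ih =>
      have hne : v ≠ T.root := by
        intro h; rw [h, T.depth_root] at hn; omega
      obtain ⟨p, hp⟩ := Option.isSome_iff_exists.mp (T.parent_of_ne v hne)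
      have hd := T.depth_parent v p hp
      show (T.parent v).bind (T.parentIter n) = some T.root
      rw [hp, Option.bind_some]
      exact ih p (by omega)

/-- indicator: 1 if x is an ancestor-or-self of v -/
def dd (T : RTree V) (x v : V) : ℕ :=
  if T.parentIter (T.depth v - T.depth x) v = some x then 1 else 0

lemma dd_pos {x v : V} (h : ∃ k, T.parentIter k v = some x) : dd T x v = 1 := by
  obtain ⟨k, hk⟩ := h
  have := depth_of_pi T k v x hk
  have hkk : T.depth v - T.depth x = k := by omega
  rw [dd, hkk, if_pos hk]

lemma dd_zero {x v : V} (h : ¬ ∃ k, T.parentIter k v = some x) : dd T x v = 0 := by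
  rw [dd, if_neg (fun hc => h ⟨_, hc⟩)]

lemma dd_cases (x v : V) :
    (dd T x v = 1 ∧ ∃ k, T.parentIter k v = some x) ∨
    (dd T x v = 0 ∧ ¬ ∃ k, T.parentIter k v = some x) := by
  by_cases h : ∃ k, T.parentIter k v = some x
  · exact Or.inl ⟨dd_pos T h, h⟩
  · exact Or.inr ⟨dd_zero T h, h⟩

lemma dd_root (v : V) : dd T T.root v = 1 :=
  dd_pos T ⟨T.depth v, root_pi T v⟩

noncomputable def childset (T : RTree V) (x : V) : Finset V :=
  Finset.univ.filter (fun w => T.parent w = some x)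

lemma mem_children {c x : V} : c ∈ T.children x ↔ T.parent c = some x := by
  simp [RTree.children, Finset.mem_toList, Finset.mem_filter]

lemma dd_split (x v : V) :
    dd T x v = (if v = x then 1 else 0) + ∑ c ∈ childset T x, dd T c v := by
  classical
  by_cases hvx : v = x
  · subst hvx
    rw [if_pos rfl]
    have hz : ∀ c ∈ childset T v, dd T c v = 0 := by
      intro c hc
      simp only [childset, Finset.mem_filter] at hc
      apply dd_zero
      rintro ⟨k, hk⟩
      have h1 := depth_of_pi T k v c hk
      have h2 := T.depth_parent c v hc.2
      omega
    rw [Finset.sum_eq_zero hz, dd_pos T ⟨0, rfl⟩]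
    omega
  · rw [if_neg hvx]
    by_cases hdesc : ∃ k, T.parentIter k v = some x
    · obtain ⟨k, hk⟩ := hdesc
      have hkpos : k ≠ 0 := by
        intro h; subst h
        exact hvx (Option.some_injective _ hk)
      obtain ⟨j, rfl⟩ := Nat.exists_eq_succ_of_ne_zero hkpos
      rw [pi_succ' T j v] at hk
      rcases hc : T.parentIter j v with _ | c
      · rw [hc] at hk; simp at hk
      · rw [hc, Option.bind_some] at hk
        have hcmem : c ∈ childset T x := by
          simp [childset, hk]
        have hdd : dd T c v = 1 := dd_pos T ⟨j, hc⟩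
        have huniq : ∀ c' ∈ childset T x, c' ≠ c → dd T c' v = 0 := by
          intro c' hc' hne
          simp only [childset, Finset.mem_filter] at hc'
          apply dd_zero
          rintro ⟨j', hj'⟩
          have d1 := depth_of_pi T j' v c' hj'
          have d2 := depth_of_pi T j v c hc
          have d3 := T.depth_parent c' x hc'.2
          have d4 := T.depth_parent c x hk
          have : j' = j := by omega
          subst this
          rw [hj'] at hc
          exact hne (Option.some_injective _ hc)
        rw [dd_pos T ⟨j+1, by rw [pi_succ' T j v, hc, Option.bind_some]; exact hk⟩]
        rw [Finset.sum_eq_single_of_mem c hcmem huniq, hdd]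
    · have hz : ∀ c ∈ childset T x, dd T c v = 0 := by
        intro c hc
        simp only [childset, Finset.mem_filter] at hc
        apply dd_zero
        rintro ⟨k, hk⟩
        exact hdesc ⟨k+1, by rw [pi_succ' T k v, hk, Option.bind_some]; exact hc.2⟩
      rw [Finset.sum_eq_zero hz, dd_zero T hdesc]
      omega

lemma children_sum (x v : V) :
    ((T.children x).map (fun c => dd T c v)).sum = ∑ c ∈ childset T x, dd T c v :=
  Finset.sum_map_toList _ _

lemma sum_dd_root : ∑ x : V, dd T T.root x = Fintype.card V := by
  simp [dd_root]


lemma count_enqR_map (l : List V) (e : Event V)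
    (he : ∀ v : V, e ≠ Event.enqR v) : (l.map Event.enqR).count e = 0 := by
  rw [List.count_eq_zero]
  intro ha
  obtain ⟨v, _, hv⟩ := List.mem_map.mp ha
  exact (he v) hv.symm

lemma children_ne_root {c x : V} (h : c ∈ T.children x) : c ≠ T.root := by
  intro hc
  rw [mem_children] at h
  rw [hc, T.root_parent] at h
  exact Option.noConfusion rfl (heq_of_eq h)


lemma run_zero (s : List V × List V) : T.run 0 s = ([], s) := rfl

lemma run_nilnil (fuel : ℕ) : T.run (fuel+1) ([], []) = ([], ([], [])) := rfl

lemma run_cons_r (fuel : ℕ) (q : List V) (f : V) (r : List V) :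
    T.run (fuel+1) (q, f :: r) =
      if T.inlinable f then
        ((Event.deqR f :: ((T.children f).map Event.enqR ++ (T.run fuel (q, r ++ T.children f)).1)),
          (T.run fuel (q, r ++ T.children f)).2)
      else
        ((Event.deqR f :: Event.enqQ f :: (T.run fuel (q ++ [f], r)).1),
          (T.run fuel (q ++ [f], r)).2) := by
  simp only [RTree.run]

lemma run_cons_q (fuel : ℕ) (e : V) (q : List V) :
    T.run (fuel+1) (e :: q, []) =
      ((Event.deqQ e :: ((T.children e).map Event.enqR ++ (T.run fuel (q, T.children e)).1)),
        (T.run fuel (q, T.children e)).2) := rfl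

/-- Case 1 invariant: from `([], r)` with all `r` elements non-root,
only `deqR` events occur, counted by descendant indicators. -/
lemma runA (h : ∀ v : V, v ≠ T.root → T.inlinable v = true) :
    ∀ (fuel : ℕ) (r : List V) (tr : List (Event V)),
      (∀ x ∈ r, x ≠ T.root) →
      T.run fuel ([], r) = (tr, ([], [])) →
      (∀ v, tr.count (Event.deqQ v) = 0) ∧
      (∀ v, tr.count (Event.deqR v) = (r.map (fun x => dd T x v)).sum) := by
  intro fuel
  induction fuel with
  | zero =>
      intro r tr hr hrun
      rw [run_zero] at hrun
      injection hrun with h1 h2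
      injection h2 with h3 h4
      subst h1; subst h4
      simp
  | succ fuel ih =>
      intro r tr hr hrun
      match r with
      | [] =>
          rw [run_nilnil] at hrun
          injection hrun with h1 _
          subst h1; simp
      | f :: r' =>
          have hf : T.inlinable f = true := h f (List.mem_cons_self |> hr f)
          rw [run_cons_r, if_pos hf] at hrun
          rcases hres : T.run fuel ([], r' ++ T.children f) with ⟨tr', s'⟩
          rw [hres] at hrun
          injection hrun with h1 h2
          subst h2
          have hr' : ∀ x ∈ r' ++ T.children f, x ≠ T.root := by
            intro x hx
            rcases List.mem_append.mp hx with hx | hx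
            · exact hr x (List.mem_cons_of_mem f hx)
            · exact children_ne_root T hx
          obtain ⟨ihQ, ihR⟩ := ih (r' ++ T.children f) tr' hr' hres
          subst h1
          constructor
          · intro v
            rw [List.count_cons, List.count_append,
              count_enqR_map _ _ (by simp), ihQ v]
            simp
          · intro v
            rw [List.count_cons, List.count_append,
              count_enqR_map _ _ (by simp), ihR v]
            rw [List.map_append, List.sum_append, List.map_cons, List.sum_cons,
              children_sum]
            have hsp := dd_split T f v
            by_cases hvf : v = f
            · subst hvf
              rw [if_pos rfl] at hsp
              have hb : (Event.deqR v == Event.deqR v) = true := by simp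
              rw [hb]
              simp only [if_true]
              omega
            · rw [if_neg hvf] at hsp
              have hb : (Event.deqR f == Event.deqR v) = false := by simp [Ne.symm hvf]
              rw [hb]
              simp only [Bool.false_eq_true, if_false]
              omega

/-- Case 2 invariant: when nothing is inlinable, each node `v` is dequeued from `q`
once per ancestor of `v` occurring in `q ++ r`. -/
lemma runB (h : ∀ v : V, T.inlinable v = false) :
    ∀ (fuel : ℕ) (q r : List V) (tr : List (Event V)),
      T.run fuel (q, r) = (tr, ([], [])) →
      ∀ v, tr.count (Event.deqQ v) = ((q ++ r).map (fun x => dd T x v)).sum := by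
  intro fuel
  induction fuel with
  | zero =>
      intro q r tr hrun v
      rw [run_zero] at hrun
      injection hrun with h1 h2
      injection h2 with h3 h4
      subst h1; subst h3; subst h4
      simp
  | succ fuel ih =>
      intro q r tr hrun v
      match q, r with
      | [], [] =>
          rw [run_nilnil] at hrun
          injection hrun with h1 _
          subst h1; simp
      | q, f :: r' =>
          rw [run_cons_r, if_neg (by rw [h f]; simp)] at hrun
          rcases hres : T.run fuel (q ++ [f], r') with ⟨tr', s'⟩
          rw [hres] at hrun
          injection hrun with h1 h2
          subst h2
          have ihv := ih (q ++ [f]) r' tr' hres v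
          subst h1
          rw [List.count_cons, List.count_cons, ihv]
          have hb1 : (Event.deqR f == Event.deqQ v) = false := by simp
          have hb2 : (Event.enqQ f == Event.deqQ v) = false := by simp
          rw [hb1, hb2]
          simp only [Bool.false_eq_true, if_false]
          rw [List.append_assoc]
          simp only [List.map_append, List.sum_append, List.map_cons, List.sum_cons,
            List.map_nil, List.sum_nil, List.singleton_append]
          omega
      | e :: q', [] =>
          rw [run_cons_q] at hrun
          rcases hres : T.run fuel (q', T.children e) with ⟨tr', s'⟩
          rw [hres] at hrun
          injection hrun with h1 h2
          subst h2
          have ihv := ih q' (T.children e) tr' hres v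
          subst h1
          rw [List.count_cons, List.count_append,
            count_enqR_map _ _ (by simp), ihv]
          rw [List.map_append, List.sum_append] at *
          rw [children_sum] at ihv ⊢
          simp only [List.map_cons, List.map_nil, List.sum_cons, List.sum_nil,
            List.append_nil]
          have hsp := dd_split T e v
          by_cases hve : v = e
          · subst hve
            rw [if_pos rfl] at hsp
            have hb : (Event.deqQ v == Event.deqQ v) = true := by simp
            rw [hb]
            simp only [if_true]
            omega
          · rw [if_neg hve] at hsp
            have hb : (Event.deqQ e == Event.deqQ v) = false := by simp [Ne.symm hve]
            rw [hb]
            simp only [Bool.false_eq_true, if_false]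
            omega

lemma countP_deqQ (tr : List (Event V)) :
    tr.countP Event.isDeqQ = ∑ v : V, tr.count (Event.deqQ v) := by
  induction tr with
  | nil => simp
  | cons e tr ih =>
      simp only [List.countP_cons, List.count_cons, Finset.sum_add_distrib, ← ih]
      congr 1
      cases e with
      | deqQ w =>
          simp only [Event.isDeqQ, if_pos rfl]
          rw [Finset.sum_eq_single_of_mem w (Finset.mem_univ w)]
          · simp
          · intro v _ hv; simp [Ne.symm hv]
      | deqR w => simp [Event.isDeqQ]
      | enqQ w => simp [Event.isDeqQ]
      | enqR w => simp [Event.isDeqQ]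

lemma countP_deqR (tr : List (Event V)) :
    tr.countP Event.isDeqR = ∑ v : V, tr.count (Event.deqR v) := by
  induction tr with
  | nil => simp
  | cons e tr ih =>
      simp only [List.countP_cons, List.count_cons, Finset.sum_add_distrib, ← ih]
      congr 1
      cases e with
      | deqR w =>
          simp only [Event.isDeqR, if_pos rfl]
          rw [Finset.sum_eq_single_of_mem w (Finset.mem_univ w)]
          · simp
          · intro v _ hv; simp [Ne.symm hv]
      | deqQ w => simp [Event.isDeqR]
      | enqQ w => simp [Event.isDeqR]
      | enqR w => simp [Event.isDeqR]

end XP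

/-- Extreme cases: if all nodes except the root are inlinable, only the root is
dequeued from `q` (so exactly one tuple is produced) and the remaining `n - 1`
nodes are all processed through `r`; dually, if no node is inlinable, every node
is dequeued from `q` and `n` tuples are produced. -/
theorem xinsert_extreme_cases
    {V : Type} [Fintype V] [DecidableEq V] (T : RTree V)
    (fuel : ℕ) (tr : List (RTree.Event V))
    (hrun : RTree.run T fuel ([T.root], []) = (tr, ([], []))) :
    ((∀ v : V, v ≠ T.root → T.inlinable v = true) →
      (∀ v : V, tr.count (RTree.Event.deqQ v) = if v = T.root then 1 else 0) ∧
      tr.countP RTree.Event.isDeqQ = 1 ∧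
      tr.countP RTree.Event.isDeqR = Fintype.card V - 1) ∧
    ((∀ v : V, T.inlinable v = false) →
      (∀ v : V, tr.count (RTree.Event.deqQ v) = 1) ∧
      tr.countP RTree.Event.isDeqQ = Fintype.card V) := by
  open RTree XP in
  constructor
  · intro h1
    match fuel, hrun with
    | 0, hrun =>
        rw [run_zero] at hrun
        injection hrun with h2 h3
        injection h3 with h4 _
        exact absurd h4 (by simp)
    | fuel + 1, hrun =>
        rw [run_cons_q] at hrun
        rcases hres : T.run fuel ([], T.children T.root) with ⟨tr', s'⟩
        rw [hres] at hrun
        injection hrun with htr h2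
        subst h2
        obtain ⟨ihQ, ihR⟩ := runA T h1 fuel (T.children T.root) tr'
          (fun x hx => children_ne_root T hx) hres
        subst htr
        have hcnt : ∀ v : V,
            (RTree.Event.deqQ T.root ::
              ((T.children T.root).map RTree.Event.enqR ++ tr')).count
              (RTree.Event.deqQ v) = if v = T.root then 1 else 0 := by
          intro v
          rw [List.count_cons, List.count_append,
            count_enqR_map _ _ (by simp), ihQ v]
          by_cases hv : v = T.root
          · subst hv; simp
          · simp [hv, Ne.symm hv]
        refine ⟨hcnt, ?_, ?_⟩
        · rw [countP_deqQ]
          simp only [hcnt]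
          simp
        · rw [countP_deqR]
          have hcR : ∀ v : V,
              (RTree.Event.deqQ T.root ::
                ((T.children T.root).map RTree.Event.enqR ++ tr')).count
                (RTree.Event.deqR v) = ∑ c ∈ childset T T.root, dd T c v := by
            intro v
            rw [List.count_cons, List.count_append,
              count_enqR_map _ _ (by simp), ihR v, children_sum]
            simp
          simp only [hcR]
          have hsum : ∑ v : V, dd T T.root v
              = (∑ v : V, if v = T.root then 1 else 0)
                + ∑ v : V, ∑ c ∈ childset T T.root, dd T c v := by
            rw [← Finset.sum_add_distrib]
            exact Finset.sum_congr rfl (fun v _ => dd_split T T.root v)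
          rw [sum_dd_root] at hsum
          rw [Finset.sum_ite_eq' Finset.univ T.root (fun _ => 1)] at hsum
          simp only [Finset.mem_univ, if_true] at hsum
          omega
  · intro h2
    have hv := runB T h2 fuel [T.root] [] tr hrun
    have hcnt : ∀ v : V, tr.count (RTree.Event.deqQ v) = 1 := by
      intro v
      rw [hv v]
      simp [dd_root]
    refine ⟨hcnt, ?_⟩
    rw [countP_deqQ]
    simp [hcnt]
end
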